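/- For all integers m ≥ 1, 1 ≤ i ≤ m, and k ≥ 1, the alternating series M_k^{(m,i)} = ∑_{j=0}^{∞} (−1)^j/(m·j+i)^k satisfies M_k^{(m,i)} = ∑_{n=0}^{∞} (n! / (2^{n+1} · m · (i/m)_{n+1})) · B_{n,k−1}^{(m,i)}, the series on the right converging. -/

import Mathlib

open Filter

/-- The numbers `B_{n,k}^{(m,i)}`: `Bnum m i k n = B_{n,k}^{(m,i)}`, defined by
`B_{n,0} = 1` and `B_{n,k} = ∑_{j=0}^{n} B_{j,k−1}/(m·j+i)` for `k ≥ 1`. -/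
noncomputable def Bnum (m i : ℕ) : ℕ → ℕ → ℝ
  | 0, _ => 1
  | (k+1), n => ∑ j ∈ Finset.range (n + 1), Bnum m i k j / ((m : ℝ) * j + i)

namespace Stmt3Aux

open Finset

/-- Generalization of `Bnum` to a real parameter. -/
noncomputable def Breal (m : ℕ) (x : ℝ) : ℕ → ℕ → ℝ
  | 0, _ => 1
  | (k+1), n => ∑ j ∈ Finset.range (n + 1), Breal m x k j / ((m : ℝ) * j + x)

lemma Bnum_eq_Breal (m i : ℕ) : ∀ k n, Bnum m i k n = Breal m (i : ℝ) k n
  | 0, _ => rfl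
  | (k+1), n => by
    simp only [Bnum, Breal]
    exact Finset.sum_congr rfl fun j _ => by rw [Bnum_eq_Breal m i k j]

noncomputable def P (m : ℕ) (x : ℝ) (n : ℕ) : ℝ := ∏ l ∈ Finset.range (n+1), ((m:ℝ) * l + x)

noncomputable def D (m : ℕ) (x : ℝ) (n : ℕ) : ℝ := (Nat.factorial n) * (m:ℝ)^n / P m x n

variable {m : ℕ} {x : ℝ}

lemma lin_pos (hx : 0 < x) (l : ℕ) : 0 < (m:ℝ)*l + x := by positivity

lemma P_pos (hx : 0 < x) (n : ℕ) : 0 < P m x n :=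
  Finset.prod_pos fun l _ => lin_pos hx l

lemma P_succ (n : ℕ) : P m x (n+1) = P m x n * ((m:ℝ)*(n+1) + x) := by
  unfold P; rw [Finset.prod_range_succ]; push_cast; ring_nf

lemma D_pos (hm : 1 ≤ m) (hx : 0 < x) (n : ℕ) : 0 < D m x n := by
  have h1 : (0:ℝ) < m := by exact_mod_cast hm
  have := P_pos (m := m) hx n
  have := Nat.factorial_pos n
  unfold D
  positivity

lemma D_succ (hm : 1 ≤ m) (hx : 0 < x) (n : ℕ) :
    D m x (n+1) = D m x n * ((n+1) * m / ((m:ℝ)*(n+1) + x)) := by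
  have hP := P_pos (m := m) hx n
  have hl := lin_pos (m := m) hx (n+1)
  unfold D
  rw [P_succ]
  push_cast [Nat.factorial_succ]
  field_simp
  ring

lemma Breal_nonneg (hx : 0 < x) : ∀ k n, 0 ≤ Breal m x k n
  | 0, _ => zero_le_one
  | (k+1), n => Finset.sum_nonneg fun j _ =>
      div_nonneg (Breal_nonneg hx k j) (lin_pos hx j).le

lemma pascal_sum (f : ℕ → ℝ) (n : ℕ) :
    ∑ l ∈ range (n+2), (-1:ℝ)^l * ((n+1).choose l) * f l
    = ∑ l ∈ range (n+1), (-1:ℝ)^l * (n.choose l) * (f l - f (l+1)) := by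
  have h0 : ∑ l ∈ range (n+2), (-1:ℝ)^l * (n.choose l) * f l
      = ∑ l ∈ range (n+1), (-1:ℝ)^l * (n.choose l) * f l := by
    rw [Finset.sum_range_succ, Nat.choose_succ_self]
    simp
  have h1 : ∑ l ∈ range (n+1), (-1:ℝ)^(l+1) * (n.choose (l+1)) * f (l+1)
      = (∑ l ∈ range (n+1), (-1:ℝ)^l * (n.choose l) * f l) - f 0 := by
    have h2 := Finset.sum_range_succ' (fun l => (-1:ℝ)^l * (n.choose l) * f l) (n+1)
    simp only [pow_zero, Nat.choose_zero_right, Nat.cast_one, one_mul] at h2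
    rw [h0] at h2
    linarith [h2]
  rw [Finset.sum_range_succ' (fun l => (-1:ℝ)^l * ((n+1).choose l) * f l) (n+1)]
  have h3 : ∀ l ∈ range (n+1), (-1:ℝ)^(l+1) * ((n+1).choose (l+1)) * f (l+1)
      = (-1:ℝ)^(l+1) * (n.choose l) * f (l+1) + (-1:ℝ)^(l+1) * (n.choose (l+1)) * f (l+1) := by
    intro l _
    have hc : ((n+1).choose (l+1) : ℝ) = (n.choose l : ℝ) + (n.choose (l+1) : ℝ) := by
      rw [Nat.choose_succ_succ]; push_cast; ring
    rw [hc]; ring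
  rw [Finset.sum_congr rfl h3, Finset.sum_add_distrib, h1]
  have h4 : ∀ l ∈ range (n+1), (-1:ℝ)^l * (n.choose l) * (f l - f (l+1))
      = (-1:ℝ)^l * (n.choose l) * f l + (-1:ℝ)^(l+1) * (n.choose l) * f (l+1) := by
    intro l _; ring
  rw [Finset.sum_congr rfl h4, Finset.sum_add_distrib]
  simp
  ring

lemma P_shift (n : ℕ) : P m (x+m) n * x = P m x (n+1) := by
  unfold P
  rw [Finset.prod_range_succ' (fun l => (m:ℝ)*l + x) (n+1)]
  have : ∀ l ∈ range (n+1), ((m:ℝ)*↑(l+1) + x) = ((m:ℝ)*l + (x+m)) := by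
    intro l _; push_cast; ring
  rw [Finset.prod_congr rfl this]
  simp [mul_comm]

lemma key_base : ∀ (n : ℕ) (x : ℝ), 0 < x →
    ∑ l ∈ range (n+1), (-1:ℝ)^l * (n.choose l) / ((m:ℝ)*l + x) = D m x n := by
  intro n
  induction n with
  | zero => intro x hx; simp [D, P]
  | succ n ih =>
    intro x hx
    have hxm : 0 < x + m := by positivity
    have e1 : ∑ l ∈ range (n+2), (-1:ℝ)^l * ((n+1).choose l) / ((m:ℝ)*l + x)
        = ∑ l ∈ range (n+1), (-1:ℝ)^l * (n.choose l) *
            (1/((m:ℝ)*l + x) - 1/((m:ℝ)*l + (x+m))) := by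
      have hp := pascal_sum (fun l => 1/((m:ℝ)*l + x)) n
      simp only [mul_one_div] at hp ⊢
      rw [hp]
      refine Finset.sum_congr rfl fun l _ => ?_
      have : ((m:ℝ)*↑(l+1) + x) = ((m:ℝ)*l + (x+m)) := by push_cast; ring
      rw [this]
    have e2 : ∑ l ∈ range (n+1), (-1:ℝ)^l * (n.choose l) *
            (1/((m:ℝ)*l + x) - 1/((m:ℝ)*l + (x+m)))
        = D m x n - D m (x+m) n := by
      rw [← ih x hx, ← ih (x+m) hxm, ← Finset.sum_sub_distrib]
      refine Finset.sum_congr rfl fun l _ => ?_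
      rw [mul_sub, mul_one_div, mul_one_div]
    show ∑ l ∈ range (n+2), (-1:ℝ)^l * ((n+1).choose l) / ((m:ℝ)*l + x) = D m x (n+1)
    rw [e1, e2]
    have hP := P_pos (m := m) hx n
    have hP1 := P_pos (m := m) hx (n+1)
    have hPm := P_pos (m := m) hxm n
    have hsh := P_shift (m := m) (x := x) n
    unfold D
    rw [P_succ]
    rw [div_sub_div _ _ (ne_of_gt hP) (ne_of_gt hPm), div_eq_div_iff (by positivity) (by positivity)]
    have hx' : x ≠ 0 := ne_of_gt hx
    have : P m (x+m) n = P m x (n+1) / x := by field_simp [← hsh]; linarith [hsh]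
    rw [this, P_succ] at *
    push_cast [Nat.factorial_succ]
    field_simp
    ring

lemma key_star (hm : 1 ≤ m) (hx : 0 < x) : ∀ n l, l ≤ n →
    (n.choose l : ℝ) / ((m:ℝ)*l + x)
      = ∑ j ∈ Finset.Icc l n, D m x n / D m x j * (j.choose l) / ((m:ℝ)*j + x) := by
  intro n
  induction n with
  | zero =>
    intro l hl
    interval_cases l
    rw [Finset.Icc_self, Finset.sum_singleton, div_self (ne_of_gt (D_pos hm hx 0))]
    norm_num
  | succ n ih =>
    intro l hl
    rcases Nat.lt_or_ge l (n+1) with h | h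
    · have hl' : l ≤ n := by omega
      have hins : Finset.Icc l (n+1) = insert (n+1) (Finset.Icc l n) := by
        ext j; simp [Finset.mem_Icc]; omega
      rw [hins, Finset.sum_insert (by simp)]
      rw [div_self (ne_of_gt (D_pos hm hx (n+1)))]
      have hr : ∀ j ∈ Finset.Icc l n, D m x (n+1) / D m x j * (j.choose l) / ((m:ℝ)*j + x)
          = ((n+1) * m / ((m:ℝ)*(n+1) + x)) * (D m x n / D m x j * (j.choose l) / ((m:ℝ)*j + x)) := by
        intro j hj
        rw [D_succ hm hx n]
        have := ne_of_gt (D_pos (m := m) hm hx j)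
        field_simp
      rw [Finset.sum_congr rfl hr, ← Finset.mul_sum, ← ih l hl']
      have hnat : (n+1) * n.choose l = (n+1).choose l * (n+1-l) := by
        rw [Nat.add_one_mul_choose_eq, Nat.choose_succ_right_eq]
      have hc : ((n:ℝ)+1) * (n.choose l : ℝ) = ((n+1).choose l : ℝ) * ((n:ℝ)+1-l) := by
        have h' : (((n+1) * n.choose l : ℕ) : ℝ) = (((n+1).choose l * (n+1-l) : ℕ) : ℝ) := by
          exact_mod_cast congrArg (Nat.cast : ℕ → ℝ) hnat
        push_cast [Nat.cast_sub (show l ≤ n+1 by omega)] at h'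
        linarith
      have h1 := ne_of_gt (lin_pos (m := m) hx l)
      have h2 := ne_of_gt (lin_pos (m := m) hx (n+1))
      have hm0 : (m:ℝ) ≠ 0 := by positivity
      push_cast
      field_simp
      linear_combination (-(↑m : ℝ)) * hc
    · have hl2 : l = n+1 := by omega
      subst hl2
      rw [Finset.Icc_self, Finset.sum_singleton, div_self (ne_of_gt (D_pos hm hx (n+1)))]
      norm_num

lemma key (hm : 1 ≤ m) : ∀ (k n : ℕ) (x : ℝ), 0 < x →
    ∑ l ∈ range (n+1), (-1:ℝ)^l * (n.choose l) / ((m:ℝ)*l + x)^(k+1)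
      = D m x n * Breal m x k n := by
  intro k
  induction k with
  | zero =>
    intro n x hx
    simpa [Breal] using key_base n x hx
  | succ k ih =>
    intro n x hx
    have hDne : ∀ j, D m x j ≠ 0 := fun j => ne_of_gt (D_pos hm hx j)
    have hlin : ∀ l : ℕ, ((m:ℝ)*l + x) ≠ 0 := fun l => ne_of_gt (lin_pos hx l)
    calc ∑ l ∈ range (n+1), (-1:ℝ)^l * (n.choose l) / ((m:ℝ)*l + x)^(k+1+1)
        = ∑ l ∈ range (n+1), ∑ j ∈ Finset.Icc l n,
            (-1:ℝ)^l * (D m x n / D m x j * (j.choose l) / ((m:ℝ)*j + x)) / ((m:ℝ)*l + x)^(k+1) := by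
          refine Finset.sum_congr rfl fun l hl => ?_
          have e : (-1:ℝ)^l * (n.choose l) / ((m:ℝ)*l + x)^(k+1+1)
              = (-1:ℝ)^l * ((n.choose l : ℝ) / ((m:ℝ)*l + x)) / ((m:ℝ)*l + x)^(k+1) := by
            rw [pow_succ, ← mul_div_assoc, div_div,
              mul_comm ((m:ℝ)*↑l + x) (((m:ℝ)*↑l + x)^(k+1))]
          rw [e, key_star hm hx n l (Nat.lt_succ_iff.mp (Finset.mem_range.mp hl))]
          rw [Finset.mul_sum, Finset.sum_div]
      _ = ∑ j ∈ range (n+1), ∑ l ∈ range (j+1),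
            (-1:ℝ)^l * (D m x n / D m x j * (j.choose l) / ((m:ℝ)*j + x)) / ((m:ℝ)*l + x)^(k+1) := by
          refine Finset.sum_comm' ?_
          intro a b
          simp only [Finset.mem_Icc, Finset.mem_range]
          omega
      _ = ∑ j ∈ range (n+1), D m x n * (Breal m x k j / ((m:ℝ)*j + x)) := by
          refine Finset.sum_congr rfl fun j _ => ?_
          have e2 : ∀ l ∈ range (j+1),
              (-1:ℝ)^l * (D m x n / D m x j * (j.choose l) / ((m:ℝ)*j + x)) / ((m:ℝ)*l + x)^(k+1)
              = (D m x n / D m x j / ((m:ℝ)*j + x)) * ((-1:ℝ)^l * (j.choose l) / ((m:ℝ)*l + x)^(k+1)) := by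
            intro l _; ring
          rw [Finset.sum_congr rfl e2, ← Finset.mul_sum, ih j x hx]
          rw [div_div, div_mul_eq_mul_div]
          rw [show D m x n * (D m x j * Breal m x k j) = D m x j * (D m x n * Breal m x k j) by ring]
          rw [mul_div_mul_left _ _ (hDne j), mul_div_assoc]
      _ = D m x n * Breal m x (k+1) n := by
          rw [← Finset.mul_sum]
          rfl

/-- Backward difference operator. -/
def dd (b : ℕ → ℝ) : ℕ → ℝ := fun j => b j - b (j+1)

lemma dd_iter : ∀ (n : ℕ) (b : ℕ → ℝ) (j : ℕ),
    dd^[n] b j = ∑ l ∈ range (n+1), (-1:ℝ)^l * (n.choose l) * b (j+l) := by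
  intro n
  induction n with
  | zero => intro b j; simp [dd]
  | succ n ih =>
    intro b j
    show dd^[n+1] b j = ∑ l ∈ range (n+2), (-1:ℝ)^l * ((n+1).choose l) * b (j+l)
    rw [Function.iterate_succ_apply, ih (dd b) j, pascal_sum (fun l => b (j+l)) n]
    exact Finset.sum_congr rfl fun l _ => rfl

/-- Euler transform of the alternating series of a completely monotone null sequence. -/
lemma euler (b : ℕ → ℝ) (hpos : ∀ n j, 0 ≤ dd^[n] b j)
    (hzero : Tendsto b atTop (nhds 0)) :
    Summable (fun n => dd^[n] b 0 / 2^(n+1)) ∧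
    Tendsto (fun N => ∑ j ∈ range N, (-1:ℝ)^j * b j) atTop
      (nhds (∑' n, dd^[n] b 0 / 2^(n+1))) := by
  have hstep' : ∀ (n : ℕ) (c : ℕ → ℝ), dd^[n+1] c = dd (dd^[n] c) :=
    fun n c => Function.iterate_succ_apply' dd n c
  have hanti : ∀ n, Antitone (dd^[n] b) := by
    intro n
    refine antitone_nat_of_succ_le fun j => ?_
    have h := hpos (n+1) j
    rw [hstep'] at h
    simpa [dd, sub_nonneg] using h
  have hle : ∀ n j, dd^[n] b j ≤ b j := by
    intro n
    induction n with
    | zero => intro j; simp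
    | succ n ih =>
      intro j
      have h1 : dd^[n+1] b j ≤ dd^[n] b j := by
        rw [hstep']
        have h2 := hpos n (j+1)
        simp only [dd]
        linarith
      exact h1.trans (ih j)
  have hzn : ∀ n, Tendsto (dd^[n] b) atTop (nhds 0) :=
    fun n => squeeze_zero (fun j => hpos n j) (fun j => hle n j) hzero
  have hL : ∀ n, ∃ l, Tendsto (fun N => ∑ j ∈ range N, (-1:ℝ)^j * dd^[n] b j) atTop (nhds l) :=
    fun n => (hanti n).tendsto_alternating_series_of_tendsto_zero (hzn n)
  choose L hLt using hL
  have hLpos : ∀ n, 0 ≤ L n := by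
    intro n
    have h := (hanti n).alternating_series_le_tendsto (hLt n) 0
    simpa using h
  have hLle : ∀ n, L n ≤ dd^[n] b 0 := by
    intro n
    have h := (hanti n).tendsto_le_alternating_series (hLt n) 0
    simpa using h
  have hrec : ∀ n, L n = dd^[n] b 0 / 2 + L (n+1) / 2 := by
    intro n
    set c := dd^[n] b with hc
    have hddc : dd c = dd^[n+1] b := (hstep' n b).symm
    have hid : ∀ N, ∑ j ∈ range N, (-1:ℝ)^j * dd c j
        = (∑ j ∈ range N, (-1:ℝ)^j * c j) + ((∑ j ∈ range (N+1), (-1:ℝ)^j * c j) - c 0) := by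
      intro N
      have h1 : ∑ j ∈ range (N+1), (-1:ℝ)^j * c j
          = (∑ j ∈ range N, (-1:ℝ)^(j+1) * c (j+1)) + c 0 := by
        simpa using Finset.sum_range_succ' (fun j => (-1:ℝ)^j * c j) N
      rw [h1]
      have h2 : ∀ j ∈ range N, (-1:ℝ)^j * dd c j
          = (-1:ℝ)^j * c j + (-1:ℝ)^(j+1) * c (j+1) := by
        intro j _; simp only [dd]; ring
      rw [Finset.sum_congr rfl h2, Finset.sum_add_distrib]
      ring
    have t1 : Tendsto (fun N => ∑ j ∈ range (N+1), (-1:ℝ)^j * c j) atTop (nhds (L n)) :=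
      (hLt n).comp (tendsto_add_atTop_nat 1)
    have t2 : Tendsto (fun N => (∑ j ∈ range N, (-1:ℝ)^j * c j)
        + ((∑ j ∈ range (N+1), (-1:ℝ)^j * c j) - c 0)) atTop
        (nhds (L n + (L n - c 0))) :=
      (hLt n).add (t1.sub tendsto_const_nhds)
    have t3 : Tendsto (fun N => ∑ j ∈ range N, (-1:ℝ)^j * dd c j) atTop (nhds (L (n+1))) := by
      simpa only [hddc] using hLt (n+1)
    have t4 : Tendsto (fun N => ∑ j ∈ range N, (-1:ℝ)^j * dd c j) atTop
        (nhds (L n + (L n - c 0))) := Tendsto.congr (fun N => (hid N).symm) t2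
    have := tendsto_nhds_unique t3 t4
    rw [this]
    ring
  have htel : ∀ N, L 0 = (∑ n ∈ range N, dd^[n] b 0 / 2^(n+1)) + L N / 2^N := by
    intro N
    induction N with
    | zero => simp
    | succ N ihN =>
      rw [ihN, Finset.sum_range_succ, hrec N]
      have h2 : (0:ℝ) < 2^N := by positivity
      field_simp
      ring
  set t : ℕ → ℝ := fun n => dd^[n] b 0 / 2^(n+1) with ht
  have htpos : ∀ n, 0 ≤ t n := fun n => by
    have := hpos n 0
    positivity
  have hsum : Summable t := by
    apply summable_of_sum_range_le htpos
    intro N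
    have h := htel N
    have h2 : (0:ℝ) ≤ L N / 2^N := by
      have := hLpos N
      positivity
    linarith
  have htz : Tendsto t atTop (nhds 0) := hsum.tendsto_atTop_zero
  have hLN : Tendsto (fun N => L N / 2^N) atTop (nhds 0) := by
    apply squeeze_zero (fun N => by have := hLpos N; positivity)
      (g := fun N => 2 * t N)
    · intro N
      have h1 := hLle N
      have h2 : (0:ℝ) < 2^N := by positivity
      have h3 : 2 * t N = dd^[N] b 0 / 2^N := by
        rw [ht]; simp only; rw [pow_succ]; field_simp
      rw [h3]
      gcongr
    · simpa using htz.const_mul 2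
  have hpart : Tendsto (fun N => ∑ n ∈ range N, t n) atTop (nhds (L 0)) := by
    have : (fun N => ∑ n ∈ range N, t n) = fun N => L 0 - L N / 2^N := by
      funext N
      have := htel N
      linarith
    rw [this]
    simpa using (tendsto_const_nhds (x := L 0)).sub hLN
  have htsum : ∑' n, t n = L 0 := tendsto_nhds_unique hsum.hasSum.tendsto_sum_nat hpart
  constructor
  · exact hsum
  · rw [htsum]
    simpa using hLt 0

end Stmt3Aux

open Stmt3Aux Finset in
/-- For all integers `m ≥ 1`, `1 ≤ i ≤ m`, `k ≥ 1`, the alternating series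
`M_k^{(m,i)} = ∑_{j=0}^{∞} (−1)^j/(m·j+i)^k` satisfies
`M_k^{(m,i)} = ∑_{n=0}^{∞} (n!/(2^{n+1} m (i/m)_{n+1})) B_{n,k−1}^{(m,i)}`, the series on
the right converging. -/
theorem stmt3 (m i : ℕ) (hm : 1 ≤ m) (hi1 : 1 ≤ i) (him : i ≤ m) (k : ℕ) (hk : 1 ≤ k) :
    Summable (fun n : ℕ =>
      (n.factorial : ℝ) / (2 ^ (n + 1) * m * ∏ j ∈ Finset.range (n + 1), ((i : ℝ) / m + j))
        * Bnum m i (k - 1) n) ∧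
    Tendsto (fun N => ∑ j ∈ Finset.range N, (-1 : ℝ) ^ j / ((m : ℝ) * j + i) ^ k) atTop
      (nhds (∑' n : ℕ,
        (n.factorial : ℝ) / (2 ^ (n + 1) * m * ∏ j ∈ Finset.range (n + 1), ((i : ℝ) / m + j))
          * Bnum m i (k - 1) n)) := by
  obtain ⟨K, rfl⟩ : ∃ K, k = K + 1 := ⟨k - 1, by omega⟩
  have hK : K + 1 - 1 = K := rfl
  rw [hK]
  have hmR : (0:ℝ) < m := by exact_mod_cast hm
  have hiR : (0:ℝ) < i := by exact_mod_cast hi1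
  set b : ℕ → ℝ := fun j => 1 / ((m:ℝ)*j + i)^(K+1) with hb
  -- complete monotonicity via the key identity
  have hddval : ∀ n j, dd^[n] b j = D m ((m:ℝ)*j + i) n * Breal m ((m:ℝ)*j + i) K n := by
    intro n j
    have hx : (0:ℝ) < (m:ℝ)*j + i := by positivity
    rw [dd_iter n b j, ← key hm K n ((m:ℝ)*j + i) hx]
    refine Finset.sum_congr rfl fun l _ => ?_
    rw [hb]
    simp only
    rw [mul_one_div]
    congr 2
    push_cast
    ring
  have hpos : ∀ n j, 0 ≤ dd^[n] b j := by
    intro n j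
    have hx : (0:ℝ) < (m:ℝ)*j + i := by positivity
    rw [hddval n j]
    exact mul_nonneg (D_pos hm hx n).le (Breal_nonneg hx K n)
  have hzero : Tendsto b atTop (nhds 0) := by
    have h1 : Tendsto (fun j : ℕ => ((m:ℝ)*j + i)) atTop atTop := by
      apply tendsto_atTop_add_const_right
      exact (tendsto_natCast_atTop_atTop (R := ℝ)).const_mul_atTop hmR
    have h2 : Tendsto (fun j : ℕ => ((m:ℝ)*j + i)^(K+1)) atTop atTop :=
      (tendsto_pow_atTop (n := K+1) (by omega)).comp h1
    rw [hb]
    simpa [one_div, Pi.inv_def] using h2.inv_tendsto_atTop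
  obtain ⟨hsum, htend⟩ := euler b hpos hzero
  -- identify the terms
  have hterm : (fun n : ℕ =>
      (n.factorial : ℝ) / (2 ^ (n + 1) * m * ∏ j ∈ Finset.range (n + 1), ((i : ℝ) / m + j))
        * Bnum m i K n) = fun n => dd^[n] b 0 / 2^(n+1) := by
    funext n
    have hx0 : ((m:ℝ)*(0:ℕ) + i) = (i:ℝ) := by push_cast; ring
    rw [hddval n 0, hx0, Bnum_eq_Breal]
    have hQpos : (0:ℝ) < ∏ j ∈ Finset.range (n + 1), ((i : ℝ) / m + j) :=
      Finset.prod_pos fun j _ => by positivity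
    have hPQ : P m (i:ℝ) n = (m:ℝ)^(n+1) * ∏ j ∈ Finset.range (n + 1), ((i : ℝ) / m + j) := by
      unfold P
      have hm0 : (m:ℝ) ≠ 0 := ne_of_gt hmR
      calc ∏ l ∈ Finset.range (n+1), ((m:ℝ) * l + i)
          = ∏ l ∈ Finset.range (n+1), ((m:ℝ) * ((i:ℝ)/m + l)) := by
            refine Finset.prod_congr rfl fun l _ => ?_
            field_simp
            ring
        _ = (∏ _l ∈ Finset.range (n+1), (m:ℝ)) * ∏ l ∈ Finset.range (n+1), ((i:ℝ)/m + l) :=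
            Finset.prod_mul_distrib
        _ = (m:ℝ)^(n+1) * ∏ j ∈ Finset.range (n + 1), ((i : ℝ) / m + j) := by
            rw [Finset.prod_const, Finset.card_range]
    have hD : D m (i:ℝ) n = (n.factorial : ℝ) / ((m:ℝ) * ∏ j ∈ Finset.range (n + 1), ((i : ℝ) / m + j)) := by
      unfold D
      rw [hPQ]
      rw [pow_succ]
      have hm0 : (m:ℝ) ≠ 0 := ne_of_gt hmR
      have hmn0 : (m:ℝ)^n ≠ 0 := pow_ne_zero n hm0
      field_simp
    rw [hD]
    ring
  rw [hterm]
  refine ⟨hsum, ?_⟩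
  have hfun2 : (fun N => ∑ j ∈ Finset.range N, (-1 : ℝ) ^ j / ((m : ℝ) * j + i) ^ (K+1))
      = fun N => ∑ j ∈ range N, (-1:ℝ)^j * b j := by
    funext N
    refine Finset.sum_congr rfl fun j _ => ?_
    rw [hb]
    simp only
    rw [mul_one_div]
  rw [hfun2]
  exact htend
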